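/- Let $n \ge 2$, let $1 \le k \le n-1$, and let $\lambda_1, \dots, \lambda_n$ be real numbers satisfying $\sum_{i=1}^n \arctan \lambda_i \ge (n-2)\frac{\pi}{2}$. Then the elementary symmetric polynomial $\sigma_k(\lambda_1, \dots, \lambda_n) \ge 0$. -/

import Mathlib

open Real Finset

noncomputable def Esym {ι : Type*} [DecidableEq ι] (μ : ι → ℝ) (s : Finset ι) (m : ℕ) : ℝ :=
  ∑ t ∈ s.powersetCard m, ∏ i ∈ t, μ i

lemma Esym_zero {ι : Type*} [DecidableEq ι] (μ : ι → ℝ) (s : Finset ι) :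
    Esym μ s 0 = 1 := by simp [Esym]

lemma Esym_nonneg {ι : Type*} [DecidableEq ι] (μ : ι → ℝ) (s : Finset ι)
    (h : ∀ i ∈ s, 0 ≤ μ i) (m : ℕ) : 0 ≤ Esym μ s m := by
  apply Finset.sum_nonneg
  intro t ht
  exact Finset.prod_nonneg fun i hi => h i ((Finset.mem_powersetCard.mp ht).1 hi)

lemma Esym_insert {ι : Type*} [DecidableEq ι] (μ : ι → ℝ) {a : ι} {s : Finset ι}
    (ha : a ∉ s) (m : ℕ) :
    Esym μ (insert a s) (m + 1) = Esym μ s (m + 1) + μ a * Esym μ s m := by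
  unfold Esym
  rw [Finset.powersetCard_succ_insert ha]
  rw [Finset.sum_union]
  · congr 1
    rw [Finset.sum_image, Finset.mul_sum]
    · apply Finset.sum_congr rfl
      intro t ht
      have hts : t ⊆ s := (Finset.mem_powersetCard.mp ht).1
      rw [Finset.prod_insert fun hat => ha (hts hat)]
    · intro t1 h1 t2 h2 h12
      have ha1 : a ∉ t1 := fun h => ha ((Finset.mem_powersetCard.mp h1).1 h)
      have ha2 : a ∉ t2 := fun h => ha ((Finset.mem_powersetCard.mp h2).1 h)
      rw [← Finset.erase_insert ha1, ← Finset.erase_insert ha2, h12]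
  · rw [Finset.disjoint_left]
    intro u hu hu'
    obtain ⟨t, ht, rfl⟩ := Finset.mem_image.mp hu'
    exact ha ((Finset.mem_powersetCard.mp hu).1 (Finset.mem_insert_self a t))

lemma Esym_key {ι : Type*} [DecidableEq ι] (s : Finset ι) :
    ∀ (μ : ι → ℝ), (∀ i ∈ s, 0 < μ i) → (∑ i ∈ s, Real.arctan (μ i)) < π / 2 →
      ∀ m : ℕ, Esym μ s (m + 1) ≤ Real.tan (∑ i ∈ s, Real.arctan (μ i)) * Esym μ s m := by
  induction s using Finset.induction_on with
  | empty =>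
      intro μ _ _ m
      have he : (∅ : Finset ι).powersetCard (m + 1) = ∅ :=
        Finset.powersetCard_eq_empty.mpr (by simp)
      simp [Esym, he]
  | @insert a s ha ih =>
      intro μ hpos hS m
      have hax : 0 < μ a := hpos a (Finset.mem_insert_self a s)
      rw [Finset.sum_insert ha] at hS ⊢
      set x := Real.arctan (μ a) with hxdef
      set y := ∑ i ∈ s, Real.arctan (μ i) with hydef
      have hx0 : 0 < x := by
        rw [hxdef, ← Real.arctan_zero]
        exact Real.arctan_strictMono hax
      have hx2 : x < π / 2 := Real.arctan_lt_pi_div_two _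
      have hy0 : 0 ≤ y := by
        apply Finset.sum_nonneg
        intro i hi
        rw [← Real.arctan_zero]
        exact (Real.arctan_strictMono (hpos i (Finset.mem_insert_of_mem hi))).le
      have hy2 : y < π / 2 := by linarith
      have hcx : 0 < Real.cos x := Real.cos_arctan_pos _
      have hcy : 0 < Real.cos y := Real.cos_pos_of_mem_Ioo ⟨by linarith [Real.pi_pos], hy2⟩
      have hcxy : 0 < Real.cos (x + y) :=
        Real.cos_pos_of_mem_Ioo ⟨by linarith [Real.pi_pos], hS⟩
      have htanx : Real.tan x = μ a := Real.tan_arctan _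
      have h1 : 1 - μ a * Real.tan y = Real.cos (x + y) / (Real.cos x * Real.cos y) := by
        rw [← htanx, Real.tan_eq_sin_div_cos, Real.tan_eq_sin_div_cos, Real.cos_add]
        field_simp
      have hfac : 0 < 1 - μ a * Real.tan y := by
        rw [h1]; exact div_pos hcxy (mul_pos hcx hcy)
      have h2 : Real.tan (x + y) * (1 - μ a * Real.tan y) = μ a + Real.tan y := by
        rw [h1, ← htanx, Real.tan_eq_sin_div_cos x, Real.tan_eq_sin_div_cos y,
          Real.tan_eq_sin_div_cos (x + y), Real.sin_add]
        field_simp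
      have hT'0 : 0 ≤ Real.tan y :=
        Real.tan_nonneg_of_nonneg_of_le_pi_div_two hy0 hy2.le
      have ih' := ih μ (fun i hi => hpos i (Finset.mem_insert_of_mem hi)) (by linarith)
      have hpos' : ∀ i ∈ s, 0 ≤ μ i := fun i hi => (hpos i (Finset.mem_insert_of_mem hi)).le
      match m with
      | 0 =>
          have hB := ih' 0
          rw [Esym_zero, mul_one] at hB
          have hB0 : 0 ≤ Esym μ s 1 := Esym_nonneg μ s hpos' 1
          rw [show (1 : ℕ) = 0 + 1 from rfl, Esym_insert μ ha 0, Esym_zero, Esym_zero,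
            mul_one, mul_one]
          set E := Esym μ s (0 + 1) with hE
          have hstep : (E + μ a) * (1 - μ a * Real.tan y) ≤
              Real.tan (x + y) * (1 - μ a * Real.tan y) := by
            rw [h2]
            nlinarith [hB, mul_nonneg (mul_nonneg hax.le hT'0) hB0,
              mul_nonneg (mul_nonneg hax.le hax.le) hT'0]
          exact (mul_le_mul_iff_of_pos_right hfac).mp hstep
      | m + 1 =>
          rw [Esym_insert μ ha (m + 1), Esym_insert μ ha m]
          set A := Esym μ s (m + 1 + 1) with hA
          set B := Esym μ s (m + 1) with hB
          set C := Esym μ s m with hC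
          have ihA : A ≤ Real.tan y * B := ih' (m + 1)
          have hA0 : 0 ≤ A := Esym_nonneg μ s hpos' _
          have hB0 : 0 ≤ B := Esym_nonneg μ s hpos' _
          have hC0 : 0 ≤ C := Esym_nonneg μ s hpos' _
          have hstep : (A + μ a * B) * (1 - μ a * Real.tan y) ≤
              (Real.tan (x + y) * (B + μ a * C)) * (1 - μ a * Real.tan y) := by
            have hexp : (Real.tan (x + y) * (B + μ a * C)) * (1 - μ a * Real.tan y) =
                (μ a + Real.tan y) * (B + μ a * C) := by
              rw [mul_comm (Real.tan (x + y)) (B + μ a * C), mul_assoc, h2]; ring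
            rw [hexp]
            nlinarith [ihA, mul_nonneg (mul_nonneg hax.le hT'0) hC0,
              mul_nonneg (mul_nonneg hax.le hax.le) hC0,
              mul_nonneg (mul_nonneg hax.le hT'0) hA0,
              mul_nonneg (mul_nonneg (mul_nonneg hax.le hax.le) hT'0) hB0]
          exact (mul_le_mul_iff_of_pos_right hfac).mp hstep

lemma Esym_compl {ι : Type*} [DecidableEq ι] (s : Finset ι) (lam : ι → ℝ)
    (h : ∀ i ∈ s, lam i ≠ 0) (k : ℕ) (hk : k ≤ s.card) :
    Esym lam s k = (∏ i ∈ s, lam i) * Esym (fun i => (lam i)⁻¹) s (s.card - k) := by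
  unfold Esym
  rw [Finset.mul_sum]
  refine Finset.sum_nbij' (fun t => s \ t) (fun t => s \ t) ?_ ?_ ?_ ?_ ?_
  · intro t ht
    obtain ⟨hts, htc⟩ := Finset.mem_powersetCard.mp ht
    exact Finset.mem_powersetCard.mpr ⟨Finset.sdiff_subset, by rw [Finset.card_sdiff_of_subset hts, htc]⟩
  · intro t ht
    obtain ⟨hts, htc⟩ := Finset.mem_powersetCard.mp ht
    refine Finset.mem_powersetCard.mpr ⟨Finset.sdiff_subset, ?_⟩
    rw [Finset.card_sdiff_of_subset hts, htc]
    omega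
  · intro t ht
    exact Finset.sdiff_sdiff_eq_self (Finset.mem_powersetCard.mp ht).1
  · intro t ht
    exact Finset.sdiff_sdiff_eq_self (Finset.mem_powersetCard.mp ht).1
  · intro t ht
    have hts : t ⊆ s := (Finset.mem_powersetCard.mp ht).1
    have hQ : (∏ i ∈ s \ t, lam i) ≠ 0 :=
      Finset.prod_ne_zero_iff.mpr fun i hi => h i (Finset.mem_sdiff.mp hi).1
    rw [← Finset.prod_sdiff hts, Finset.prod_inv_distrib, mul_comm (∏ i ∈ s \ t, lam i),
      mul_assoc, mul_inv_cancel₀ hQ, mul_one]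

theorem stmt_5 (n : ℕ) (hn : 2 ≤ n) (k : ℕ) (hk1 : 1 ≤ k) (hk2 : k ≤ n - 1)
    (lam : Fin n → ℝ)
    (hphase : (n - 2 : ℝ) * (Real.pi / 2) ≤ ∑ i, Real.arctan (lam i)) :
    0 ≤ ∑ s ∈ Finset.univ.powersetCard k, ∏ i ∈ s, lam i := by
  classical
  show 0 ≤ Esym lam Finset.univ k
  by_cases hall : ∀ i, 0 ≤ lam i
  · exact Esym_nonneg _ _ (fun i _ => hall i) k
  push_neg at hall
  obtain ⟨i0, hi0⟩ := hall
  set s : Finset (Fin n) := Finset.univ.erase i0 with hs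
  have hi0s : i0 ∉ s := Finset.notMem_erase _ _
  have huniv : (Finset.univ : Finset (Fin n)) = insert i0 s :=
    (Finset.insert_erase (Finset.mem_univ i0)).symm
  have hcard : s.card = n - 1 := by
    rw [hs, Finset.card_erase_of_mem (Finset.mem_univ _), Finset.card_univ, Fintype.card_fin]
  have hsum_split : ∑ i, Real.arctan (lam i) =
      Real.arctan (lam i0) + ∑ i ∈ s, Real.arctan (lam i) := by
    rw [huniv, Finset.sum_insert hi0s]
  have hpair : ∀ j ∈ s, -lam i0 ≤ lam j := by
    intro j hj
    have hji0 : j ≠ i0 := Finset.ne_of_mem_erase hj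
    set u : Finset (Fin n) := s.erase j with hu
    have h2 : ∑ i ∈ s, Real.arctan (lam i) =
        Real.arctan (lam j) + ∑ i ∈ u, Real.arctan (lam i) :=
      (Finset.add_sum_erase s _ hj).symm
    have hucard : u.card = n - 2 := by
      rw [hu, Finset.card_erase_of_mem hj, hcard]
      omega
    have h3 : ∑ i ∈ u, Real.arctan (lam i) ≤ (n - 2 : ℝ) * (π / 2) := by
      calc ∑ i ∈ u, Real.arctan (lam i) ≤ ∑ _i ∈ u, π / 2 :=
            Finset.sum_le_sum fun i _ => (Real.arctan_lt_pi_div_two _).le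
        _ = (u.card : ℝ) * (π / 2) := by rw [Finset.sum_const, nsmul_eq_mul]
        _ = (n - 2 : ℝ) * (π / 2) := by
            rw [hucard]
            congr 1
            push_cast [Nat.cast_sub hn]
            ring
    have hkey : 0 ≤ Real.arctan (lam i0) + Real.arctan (lam j) := by
      rw [hsum_split, h2] at hphase
      linarith
    have harc : Real.arctan (-lam i0) ≤ Real.arctan (lam j) := by
      rw [Real.arctan_neg]; linarith
    exact Real.arctan_strictMono.le_iff_le.mp harc
  have ht0 : 0 < -lam i0 := neg_pos.mpr hi0
  have hlampos : ∀ j ∈ s, 0 < lam j := fun j hj => lt_of_lt_of_le ht0 (hpair j hj)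
  have hμpos : ∀ j ∈ s, 0 < (lam j)⁻¹ := fun j hj => inv_pos.mpr (hlampos j hj)
  set S := ∑ i ∈ s, Real.arctan ((lam i)⁻¹) with hSdef
  have hSval : S = ∑ i ∈ s, (π / 2 - Real.arctan (lam i)) :=
    Finset.sum_congr rfl fun j hj => Real.arctan_inv_of_pos (hlampos j hj)
  have harct0 : 0 < Real.arctan (-lam i0) := by
    rw [← Real.arctan_zero]; exact Real.arctan_strictMono ht0
  have harct2 : Real.arctan (-lam i0) < π / 2 := Real.arctan_lt_pi_div_two _
  have hSle : S ≤ π / 2 - Real.arctan (-lam i0) := by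
    rw [hSval, Finset.sum_sub_distrib, Finset.sum_const, nsmul_eq_mul, hcard]
    have hcast : ((n - 1 : ℕ) : ℝ) = (n : ℝ) - 1 := by
      push_cast [Nat.cast_sub (by omega : 1 ≤ n)]; ring
    rw [hcast, Real.arctan_neg]
    have : (n - 2 : ℝ) * (π / 2) - Real.arctan (lam i0) ≤ ∑ i ∈ s, Real.arctan (lam i) := by
      rw [hsum_split] at hphase; linarith
    linarith
  have hS0 : 0 ≤ S := by
    apply Finset.sum_nonneg
    intro j hj
    rw [← Real.arctan_zero]
    exact (Real.arctan_strictMono (hμpos j hj)).le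
  have hS2 : S < π / 2 := by linarith
  have htan : Real.tan S ≤ (-lam i0)⁻¹ := by
    have hmem1 : S ∈ Set.Ioo (-(π / 2)) (π / 2) := ⟨by linarith [Real.pi_pos], hS2⟩
    have hmem2 : π / 2 - Real.arctan (-lam i0) ∈ Set.Ioo (-(π / 2)) (π / 2) :=
      ⟨by linarith, by linarith⟩
    have h1 := Real.strictMonoOn_tan.monotoneOn hmem1 hmem2 hSle
    rwa [Real.tan_pi_div_two_sub, Real.tan_arctan] at h1
  have hμnn : ∀ i ∈ s, (0:ℝ) ≤ (lam i)⁻¹ := fun i hi => (hμpos i hi).le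
  have hkey := Esym_key s (fun i => (lam i)⁻¹) hμpos hS2 (s.card - k)
  have hE0 : 0 ≤ Esym (fun i => (lam i)⁻¹) s (s.card - k) := Esym_nonneg _ _ hμnn _
  have hE1 : 0 ≤ Esym (fun i => (lam i)⁻¹) s (s.card - k + 1) := Esym_nonneg _ _ hμnn _
  have hmain : (-lam i0) * Esym (fun i => (lam i)⁻¹) s (s.card - k + 1) ≤
      Esym (fun i => (lam i)⁻¹) s (s.card - k) := by
    have hts : Real.tan S * Esym (fun i => (lam i)⁻¹) s (s.card - k) ≤
        (-lam i0)⁻¹ * Esym (fun i => (lam i)⁻¹) s (s.card - k) :=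
      mul_le_mul_of_nonneg_right htan hE0
    have := mul_le_mul_of_nonneg_left (hkey.trans hts) ht0.le
    calc (-lam i0) * Esym (fun i => (lam i)⁻¹) s (s.card - k + 1)
        ≤ (-lam i0) * ((-lam i0)⁻¹ * Esym (fun i => (lam i)⁻¹) s (s.card - k)) := this
      _ = Esym (fun i => (lam i)⁻¹) s (s.card - k) := by
          rw [← mul_assoc, mul_inv_cancel₀ ht0.ne', one_mul]
  have hkN : k ≤ s.card := by omega
  have hk' : k - 1 + 1 = k := by omega
  have hdec : Esym lam Finset.univ (k - 1 + 1) =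
      Esym lam s (k - 1 + 1) + lam i0 * Esym lam s (k - 1) := by
    rw [huniv]; exact Esym_insert lam hi0s (k - 1)
  rw [hk'] at hdec
  have hne : ∀ i ∈ s, lam i ≠ 0 := fun i hi => (hlampos i hi).ne'
  have hc1 : Esym lam s k = (∏ i ∈ s, lam i) * Esym (fun i => (lam i)⁻¹) s (s.card - k) :=
    Esym_compl s lam hne k hkN
  have hc2 : Esym lam s (k - 1) =
      (∏ i ∈ s, lam i) * Esym (fun i => (lam i)⁻¹) s (s.card - k + 1) := by
    rw [Esym_compl s lam hne (k - 1) (by omega)]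
    have : s.card - (k - 1) = s.card - k + 1 := by omega
    rw [this]
  have hP : 0 < ∏ i ∈ s, lam i := Finset.prod_pos hlampos
  rw [hdec, hc1, hc2]
  nlinarith [mul_le_mul_of_nonneg_left hmain hP.le]
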